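/- Taylor unbiasing bias bound: let L ∈ C^{k+2}(0,∞) (k ≥ 2 even), let τ be a bounded symmetric random variable with E[τ] = 0, E[τ²] = η², |τ| ≤ 1/2, and E[τ^i] = C_i η^i. Suppose |λ^i L^{(i)}(λ)| ≤ Λ_i(λ) for 0 ≤ i ≤ k+2 and Λ_{k+2}((1−τ)λ)/Λ_{k+2}(λ) ≤ R(λ). Define F_λ(τ) = L((1−τ)λ), and G_λ(τ) = F_λ(τ) − B₂η²F_λ''(τ) − B₄η⁴F_λ^{(4)}(τ) − ⋯ − B_k η^k F_λ^{(k)}(τ), where the constants B_i satisfy the recursion C_i/i! − B₂C_{i−2}/(i−2)! − ⋯ − B_{i−2}C₂/2! − B_i = 0 for i = 2,4,…,k. Then |E[G_λ(τ)] − L(λ)| ≲ k R(λ) Λ_{k+2}(λ)(2Eη)^{k+2}, where E = max over relevant indices of (T^j |B_i|/j!)^{1/(i+j)} with T = max_i C_i^{1/i}. -/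

import Mathlib

open MeasureTheory

noncomputable section

lemma st14_contDiffOn_iteratedDeriv {f : ℝ → ℝ} {s : Set ℝ} (hs : IsOpen s) {n : ℕ}
    (hf : ContDiffOn ℝ n f s) :
    ∀ j m : ℕ, j + m ≤ n → ContDiffOn ℝ m (iteratedDeriv j f) s := by
  intro j
  induction j with
  | zero => intro m hm; simpa [iteratedDeriv_zero] using hf.of_le (by exact_mod_cast (by omega : m ≤ n))
  | succ j IH =>
      intro m hm
      rw [iteratedDeriv_succ]
      exact (IH (m+1) (by omega)).deriv_of_isOpen hs (by exact_mod_cast le_refl (m+1))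

lemma st14_hasDerivAt {f : ℝ → ℝ} {s : Set ℝ} (hs : IsOpen s) {n : ℕ}
    (hf : ContDiffOn ℝ n f s) {j : ℕ} (hj : j < n) {x : ℝ} (hx : x ∈ s) :
    HasDerivAt (iteratedDeriv j f) (iteratedDeriv (j+1) f x) x := by
  have h1 : ContDiffOn ℝ 1 (iteratedDeriv j f) s :=
    st14_contDiffOn_iteratedDeriv hs hf j 1 (by omega)
  have h2 : DifferentiableAt ℝ (iteratedDeriv j f) x :=
    (h1.differentiableOn one_ne_zero x hx).differentiableAt (hs.mem_nhds hx)
  simpa [iteratedDeriv_succ] using h2.hasDerivAt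

lemma st14_continuousOn {f : ℝ → ℝ} {s : Set ℝ} (hs : IsOpen s) {n : ℕ}
    (hf : ContDiffOn ℝ n f s) {m : ℕ} (hm : m ≤ n) : ContinuousOn (iteratedDeriv m f) s := by
  have := st14_contDiffOn_iteratedDeriv hs hf m 0 (by omega)
  simpa [contDiffOn_zero] using this

lemma st14_itD_itD {f : ℝ → ℝ} (j : ℕ) : ∀ m : ℕ,
    iteratedDeriv m (iteratedDeriv j f) = iteratedDeriv (j + m) f := by
  intro m
  induction m with
  | zero => simp [iteratedDeriv_zero]
  | succ m IH =>
      have : j + (m + 1) = (j + m) + 1 := by omega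
      rw [iteratedDeriv_succ, IH, ← iteratedDeriv_succ, this]

lemma st14_itDW_eq {f : ℝ → ℝ} {u : Set ℝ} (hu : IsOpen u) {n : ℕ}
    (hf : ContDiffOn ℝ n f u) {s : Set ℝ} (hsu : s ⊆ u) (hs : UniqueDiffOn ℝ s) :
    ∀ m, m ≤ n → ∀ x ∈ s, iteratedDerivWithin m f s x = iteratedDeriv m f x := by
  intro m
  induction m with
  | zero => intro _ x hx; simp [iteratedDerivWithin_zero, iteratedDeriv_zero]
  | succ m IH =>
      intro hm x hx
      rw [iteratedDerivWithin_succ]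
      rw [derivWithin_congr (fun y hy => IH (by omega) y hy) (IH (by omega) x hx)]
      rw [(st14_hasDerivAt hu hf (show m < n by omega) (hsu hx)).differentiableAt.derivWithin (hs x hx)]
      exact ((st14_hasDerivAt hu hf (show m < n by omega) (hsu hx)).deriv)
lemma st14_taylor_core {f : ℝ → ℝ} {n : ℕ} {M t : ℝ}
    (hf : ContDiffOn ℝ ((n+1 : ℕ)) f (Set.Ioo (-1:ℝ) 1))
    (hM : ∀ y ∈ Set.Icc (-(1/2):ℝ) (1/2), |iteratedDeriv (n+1) f y| ≤ M)
    (ht0 : 0 < t) (ht : t ≤ 1/2) :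
    |f t - ∑ m ∈ Finset.range (n+1), t^m / m.factorial * iteratedDeriv m f 0|
      ≤ M * t^(n+1) / (n+1).factorial := by
  have hsub : Set.Icc (0:ℝ) t ⊆ Set.Ioo (-1:ℝ) 1 := fun y hy => ⟨by linarith [hy.1], by linarith [hy.2]⟩
  have hud : UniqueDiffOn ℝ (Set.Icc (0:ℝ) t) := uniqueDiffOn_Icc ht0
  have heq := st14_itDW_eq isOpen_Ioo hf hsub hud
  have hfn : ContDiffOn ℝ n f (Set.Icc (0:ℝ) t) :=
    (hf.of_le (by exact_mod_cast Nat.le_succ n)).mono hsub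
  have hdiff : DifferentiableOn ℝ (iteratedDerivWithin n f (Set.Icc (0:ℝ) t)) (Set.Ioo 0 t) := by
    have h1 : DifferentiableOn ℝ (iteratedDeriv n f) (Set.Ioo 0 t) := fun y hy =>
      ((st14_hasDerivAt isOpen_Ioo hf (by omega) (hsub (Set.mem_Icc_of_Ioo hy))).differentiableAt).differentiableWithinAt
    exact h1.congr (fun y hy => heq n (by omega) y (Set.mem_Icc_of_Ioo hy))
  have hIcc : Set.uIcc (0:ℝ) t = Set.Icc 0 t := Set.uIcc_of_le ht0.le
  have hIoo : Set.uIoo (0:ℝ) t = Set.Ioo 0 t := Set.uIoo_of_le ht0.le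
  obtain ⟨x', hx', hrem⟩ := taylor_mean_remainder_lagrange (x₀ := 0) (x := t) ht0.ne
    (by rw [hIcc]; exact hfn) (by rw [hIcc, hIoo]; exact hdiff)
  rw [hIcc] at hrem
  rw [hIoo] at hx'
  have hpoly : taylorWithinEval f n (Set.Icc (0:ℝ) t) 0 t
      = ∑ m ∈ Finset.range (n+1), t^m / m.factorial * iteratedDeriv m f 0 := by
    rw [taylor_within_apply]
    refine Finset.sum_congr rfl fun m hm => ?_
    rw [heq m (by simp at hm; omega) 0 (Set.mem_Icc.2 ⟨le_refl 0, ht0.le⟩)]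
    simp only [smul_eq_mul, sub_zero]
    ring
  rw [sub_zero] at hrem
  rw [hpoly] at hrem
  have hx'i : x' ∈ Set.Icc (0:ℝ) t := Set.mem_Icc_of_Ioo hx'
  rw [hrem, heq (n+1) le_rfl x' hx'i, abs_div, abs_mul, abs_of_pos (pow_pos ht0 _), Nat.abs_cast]
  have hb : |iteratedDeriv (n+1) f x'| ≤ M :=
    hM x' ⟨by linarith [hx'i.1], by linarith [hx'i.2]⟩
  gcongr

lemma st14_taylor {f : ℝ → ℝ} {n : ℕ} {M t : ℝ}
    (hf : ContDiffOn ℝ ((n+1 : ℕ)) f (Set.Ioo (-1:ℝ) 1))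
    (hM : ∀ y ∈ Set.Icc (-(1/2):ℝ) (1/2), |iteratedDeriv (n+1) f y| ≤ M)
    (ht : |t| ≤ 1/2) :
    |f t - ∑ m ∈ Finset.range (n+1), t^m / m.factorial * iteratedDeriv m f 0|
      ≤ M * |t|^(n+1) / (n+1).factorial := by
  rcases lt_trichotomy t 0 with hneg | hzero | hpos
  · -- reflect
    set g : ℝ → ℝ := fun x => f (-x) with hg
    have hgf : ContDiffOn ℝ ((n+1 : ℕ)) g (Set.Ioo (-1:ℝ) 1) := by
      apply hf.comp (contDiff_neg.contDiffOn)
      intro x hx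
      exact ⟨by have := hx.2; simp only [Set.mem_Ioo] at *; linarith, by have := hx.1; simp only [Set.mem_Ioo] at *; linarith⟩
    have hgd : ∀ (m : ℕ) (y : ℝ), iteratedDeriv m g y = (-1:ℝ)^m * iteratedDeriv m f (-y) := by
      intro m y
      simpa [smul_eq_mul] using iteratedDeriv_comp_neg m f y
    have hgM : ∀ y ∈ Set.Icc (-(1/2):ℝ) (1/2), |iteratedDeriv (n+1) g y| ≤ M := by
      intro y hy
      rw [hgd, abs_mul, abs_pow, abs_neg, abs_one, one_pow, one_mul]
      exact hM (-y) ⟨by linarith [hy.2], by linarith [hy.1]⟩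
    have := st14_taylor_core hgf hgM (show 0 < -t by linarith)
      (by rw [abs_of_neg hneg] at ht; linarith)
    have hsum : ∑ m ∈ Finset.range (n+1), (-t)^m / m.factorial * iteratedDeriv m g 0
        = ∑ m ∈ Finset.range (n+1), t^m / m.factorial * iteratedDeriv m f 0 := by
      refine Finset.sum_congr rfl fun m _ => ?_
      rw [hgd m 0, neg_zero, neg_pow]
      have h2 : ((-1:ℝ)^m)*((-1:ℝ)^m) = 1 := by
        rw [← pow_add, ← two_mul, pow_mul]; norm_num
      linear_combination (t ^ m * iteratedDeriv m f 0 / (m.factorial : ℝ)) * h2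
    have hgt : g (-t) = f t := by simp [hg]
    rw [hsum, hgt] at this
    rw [abs_of_neg hneg]
    exact this
  · subst hzero
    simp [Finset.sum_range_succ']
  · rw [abs_of_pos hpos]
    exact st14_taylor_core hf hM hpos (by rwa [abs_of_pos hpos] at ht)
lemma st14_chain {L : ℝ → ℝ} {l : ℝ} (hl : 0 < l) {N : ℕ}
    (hL : ContDiffOn ℝ N L (Set.Ioi 0)) :
    ∀ i ≤ N, ∀ t ∈ Set.Ioo (-1:ℝ) 1,
      iteratedDeriv i (fun s => L ((1-s)*l)) t = (-l)^i * iteratedDeriv i L ((1-t)*l) := by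
  intro i
  induction i with
  | zero => intro _ t _; simp [iteratedDeriv_zero]
  | succ i IH =>
      intro hi t htm
      have hx : (1-t)*l ∈ Set.Ioi (0:ℝ) := by
        have : 0 < 1 - t := by linarith [htm.2]
        exact mul_pos this hl
      rw [iteratedDeriv_succ]
      have hev : iteratedDeriv i (fun s => L ((1-s)*l))
          =ᶠ[nhds t] (fun s => (-l)^i * iteratedDeriv i L ((1-s)*l)) := by
        filter_upwards [isOpen_Ioo.mem_nhds htm] with s hs
        exact IH (by omega) s hs
      rw [hev.deriv_eq]
      have h2 : HasDerivAt (fun s : ℝ => (1-s)*l) (-l) t := by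
        simpa using ((hasDerivAt_const t (1:ℝ)).sub (hasDerivAt_id t)).mul_const l
      have h1 : HasDerivAt (iteratedDeriv i L) (iteratedDeriv (i+1) L ((1-t)*l)) ((1-t)*l) :=
        st14_hasDerivAt isOpen_Ioi hL (by omega) hx
      have h3 := (h1.comp t h2).const_mul ((-l)^i)
      have h4 := h3.deriv
      simp only [Function.comp] at h4
      rw [h4]
      ring

lemma st14_integrable {Ω : Type} [MeasureSpace Ω] (hprob : IsProbabilityMeasure (volume : Measure Ω))
    {g : ℝ → ℝ} (hg : ContinuousOn g (Set.Icc (-(1/2):ℝ) (1/2)))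
    {τ : Ω → ℝ} (hτ : Measurable τ) (hb : ∀ ω, |τ ω| ≤ 1/2) :
    Integrable (fun ω => g (τ ω)) := by
  have hmem : ∀ ω, τ ω ∈ Set.Icc (-(1/2):ℝ) (1/2) := by
    intro ω; rw [Set.mem_Icc, ← abs_le]; exact hb ω
  have hmeas : Measurable (fun ω => g (τ ω)) := by
    have hc : Continuous ((Set.Icc (-(1/2):ℝ) (1/2)).restrict g) :=
      continuousOn_iff_continuous_restrict.mp hg
    have : (fun ω => g (τ ω))
        = ((Set.Icc (-(1/2):ℝ) (1/2)).restrict g) ∘ (fun ω => (⟨τ ω, hmem ω⟩ : Set.Icc (-(1/2):ℝ) (1/2))) := rfl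
    rw [this]
    exact hc.measurable.comp (hτ.subtype_mk)
  obtain ⟨M₀, hM₀⟩ := isCompact_Icc.exists_bound_of_continuousOn hg
  exact (integrable_const M₀).mono' hmeas.aestronglyMeasurable
    (Filter.Eventually.of_forall fun ω => by simpa using hM₀ _ (hmem ω))

lemma st14_sum_ite {M : Type*} [AddCommMonoid M] {a b : ℕ} (h : a ≤ b) (f : ℕ → M) :
    ∑ m ∈ Finset.range b, (if m < a then f m else 0) = ∑ m ∈ Finset.range a, f m := by
  rw [← Finset.sum_filter]
  congr 1
  ext m
  simp only [Finset.mem_filter, Finset.mem_range]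
  omega

lemma st14_even_sum {M : Type*} [AddCommMonoid M] (n : ℕ) (g : ℕ → M)
    (h : ∀ m < 2*n, Odd m → g m = 0) :
    ∑ m ∈ Finset.range (2*n), g m = ∑ m' ∈ Finset.range n, g (2*m') := by
  induction n with
  | zero => simp
  | succ n IH =>
      rw [show 2*(n+1) = (2*n+1)+1 from by omega, Finset.sum_range_succ, Finset.sum_range_succ,
        Finset.sum_range_succ, IH (fun m hm hodd => h m (by omega) hodd),
        h (2*n+1) (by omega) ⟨n, by omega⟩, add_zero]

lemma st14_rec_sum {i' : ℕ} (hi : 1 ≤ i') (u : ℕ → ℝ) :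
    ∑ j ∈ Finset.range (i'+1), u j = u 0 + (∑ j ∈ Finset.Ico 1 i', u j) + u i' := by
  rw [Finset.range_eq_Ico, ← Finset.sum_Ico_consecutive _ (by omega : (0:ℕ) ≤ 1) (by omega : 1 ≤ i'+1),
    Finset.sum_Ico_succ_top hi]
  have : ∑ j ∈ Finset.Ico 0 1, u j = u 0 := by simp
  rw [this]
  ring

lemma st14_key_reindex (K : ℕ) (G : ℕ → ℕ → ℝ) :
    ∑ m' ∈ Finset.range (K+1), ∑ j ∈ Finset.range (K+1), (if j + m' ≤ K then G j m' else 0)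
      = ∑ i' ∈ Finset.range (K+1), ∑ j ∈ Finset.range (i'+1), G j (i'-j) := by
  have hL : ∑ m' ∈ Finset.range (K+1), ∑ j ∈ Finset.range (K+1), (if j + m' ≤ K then G j m' else 0)
      = ∑ p ∈ (Finset.range (K+1) ×ˢ Finset.range (K+1)).filter (fun p => p.2 + p.1 ≤ K),
          G p.2 p.1 := by
    rw [Finset.sum_filter, Finset.sum_product]
  have hR : ∑ i' ∈ Finset.range (K+1), ∑ j ∈ Finset.range (i'+1), G j (i'-j)
      = ∑ q ∈ (Finset.range (K+1) ×ˢ Finset.range (K+1)).filter (fun q => q.2 ≤ q.1),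
          G q.2 (q.1 - q.2) := by
    rw [Finset.sum_filter, Finset.sum_product]
    refine Finset.sum_congr rfl fun i' hi' => ?_
    rw [Finset.mem_range] at hi'
    rw [← st14_sum_ite (show i'+1 ≤ K+1 from by omega) (fun j => G j (i'-j))]
    exact Finset.sum_congr rfl fun j _ => by
      congr 1
      simp only [eq_iff_iff]
      omega
  rw [hL, hR]
  refine Finset.sum_nbij' (fun p => (p.2 + p.1, p.2)) (fun q => (q.1 - q.2, q.2)) ?_ ?_ ?_ ?_ ?_
  · rintro ⟨a, b⟩ hp
    simp only [Finset.mem_filter, Finset.mem_product, Finset.mem_range] at hp ⊢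
    omega
  · rintro ⟨a, b⟩ hq
    simp only [Finset.mem_filter, Finset.mem_product, Finset.mem_range] at hq ⊢
    omega
  · rintro ⟨a, b⟩ hp
    simp only [Finset.mem_filter, Finset.mem_product, Finset.mem_range] at hp
    dsimp only
    simp only [Prod.mk.injEq]
    exact ⟨by omega, trivial⟩
  · rintro ⟨a, b⟩ hq
    simp only [Finset.mem_filter, Finset.mem_product, Finset.mem_range] at hq
    dsimp only
    simp only [Prod.mk.injEq]
    exact ⟨by omega, trivial⟩
  · rintro ⟨a, b⟩ hp
    simp only [Finset.mem_filter, Finset.mem_product, Finset.mem_range] at hp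
    dsimp only
    congr 1
    omega

lemma st14_poly {k : ℕ} (hke : Even k) (hk2 : 2 ≤ k) (C B : ℕ → ℝ) (η : ℝ)
    (hC0 : C 0 = 1) (hB0 : B 0 = 1)
    (hrec : ∀ i, Even i → 2 ≤ i → i ≤ k →
      C i / (i.factorial : ℝ)
        - (∑ j ∈ Finset.Ico 1 (i / 2), B (2 * j) * C (i - 2 * j) / ((i - 2 * j).factorial : ℝ))
        - B i = 0)
    (D I : ℕ → ℝ)
    (hIo : ∀ m ≤ k+2, Odd m → I m = 0) (hIe : ∀ m ≤ k+2, Even m → I m = C m * η ^ m) :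
    ∑ j ∈ Finset.range (k/2+1), (if j = 0 then (1:ℝ) else -(B (2*j) * η^(2*j))) *
      ∑ m ∈ Finset.range (k+2-2*j), D (2*j+m) / (m.factorial : ℝ) * I m = D 0 := by
  obtain ⟨K, hK⟩ := hke
  have hKk : k = 2*K := by omega
  subst hKk
  have hK1 : 1 ≤ K := by omega
  rw [show (2*K)/2 = K from by omega]
  set e : ℕ → ℝ := fun j => if j = 0 then (1:ℝ) else -(B (2*j) * η^(2*j)) with he
  set G : ℕ → ℕ → ℝ := fun j m' =>
    e j * (D (2*(j+m')) * (C (2*m') * η^(2*m') / ((2*m').factorial : ℝ))) with hG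
  calc
    ∑ j ∈ Finset.range (K+1), e j * ∑ m ∈ Finset.range (2*K+2-2*j),
        D (2*j+m) / (m.factorial : ℝ) * I m
      = ∑ j ∈ Finset.range (K+1), ∑ m ∈ Finset.range (2*K+2),
          (if m < 2*K+2-2*j then e j * (D (2*j+m) / (m.factorial : ℝ) * I m) else 0) := by
        refine Finset.sum_congr rfl fun j hj => ?_
        rw [Finset.mem_range] at hj
        rw [← st14_sum_ite (show 2*K+2-2*j ≤ 2*K+2 from by omega)
          (fun m => D (2*j+m) / (m.factorial : ℝ) * I m), Finset.mul_sum]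
        exact Finset.sum_congr rfl fun m _ => by rw [mul_ite, mul_zero]
    _ = ∑ m ∈ Finset.range (2*K+2), ∑ j ∈ Finset.range (K+1),
          (if m < 2*K+2-2*j then e j * (D (2*j+m) / (m.factorial : ℝ) * I m) else 0) :=
        Finset.sum_comm
    _ = ∑ m' ∈ Finset.range (K+1), ∑ j ∈ Finset.range (K+1),
          (if 2*m' < 2*K+2-2*j then e j * (D (2*j+2*m') / ((2*m').factorial : ℝ) * I (2*m')) else 0) := by
        rw [show 2*K+2 = 2*(K+1) from by omega]
        exact st14_even_sum (K+1) _ (fun m hm hodd => by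
          have : I m = 0 := hIo m (by omega) hodd
          simp [this])
    _ = ∑ m' ∈ Finset.range (K+1), ∑ j ∈ Finset.range (K+1),
          (if j + m' ≤ K then G j m' else 0) := by
        refine Finset.sum_congr rfl fun m' hm' => Finset.sum_congr rfl fun j hj => ?_
        rw [Finset.mem_range] at hm' hj
        simp only [show (2*m' < 2*K+2-2*j) ↔ (j+m' ≤ K) from by omega]
        by_cases hc : j + m' ≤ K
        · rw [if_pos hc, if_pos hc, hG]
          rw [hIe (2*m') (by omega) ⟨m', by ring⟩, show 2*j+2*m' = 2*(j+m') from by omega]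
          ring
        · rw [if_neg hc, if_neg hc]
    _ = ∑ i' ∈ Finset.range (K+1), ∑ j ∈ Finset.range (i'+1), G j (i'-j) :=
        st14_key_reindex K G
    _ = ∑ i' ∈ Finset.range (K+1), (if i' = 0 then D 0 else 0) := by
        refine Finset.sum_congr rfl fun i' hi' => ?_
        rw [Finset.mem_range] at hi'
        by_cases h0 : i' = 0
        · subst h0
          simp [hG, he, hC0]
        · rw [if_neg h0]
          have hi1 : 1 ≤ i' := by omega
          rw [st14_rec_sum hi1 (fun j => G j (i'-j))]
          have hA : G 0 i' = D (2*i') * (C (2*i') * η^(2*i') / ((2*i').factorial : ℝ)) := by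
            simp [hG, he]
          have hB' : G i' 0 = -(B (2*i') * η^(2*i')) * D (2*i') := by
            simp [hG, he, h0, hC0]
          have hMid : ∑ j ∈ Finset.Ico 1 i', G j (i'-j)
              = -(D (2*i') * η^(2*i') *
                  ∑ j ∈ Finset.Ico 1 i', B (2*j) * C (2*i'-2*j) / ((2*i'-2*j).factorial : ℝ)) := by
            rw [Finset.mul_sum, ← Finset.sum_neg_distrib]
            refine Finset.sum_congr rfl fun j hj => ?_
            rw [Finset.mem_Ico] at hj
            simp only [hG, he]
            rw [if_neg (show ¬ j = 0 from by omega)]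
            rw [show j + (i'-j) = i' from by omega, show 2*(i'-j) = 2*i'-2*j from by omega]
            have hη : η^(2*j) * η^(2*i'-2*j) = η^(2*i') := by
              rw [← pow_add]; congr 1; omega
            rw [← hη]; ring
          rw [Nat.sub_zero, Nat.sub_self, hA, hB', hMid]
          have hr := hrec (2*i') ⟨i', by ring⟩ (by omega) (by omega)
          rw [show (2*i')/2 = i' from by omega] at hr
          linear_combination (D (2*i') * η^(2*i')) * hr
    _ = D 0 := by simp

/-- STATEMENT 14, Taylor unbiasing bias bound.  There is an absolute constant `c` such
that for any even `k ≥ 2`, any `L ∈ C^{k+2}(0,∞)`, any bounded symmetric random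
variable `τ` with `|τ| ≤ 1/2`, `E[τⁱ] = Cᵢ ηⁱ` for even `i` (`C₂ = 1`, so `E[τ²] = η²`)
and vanishing odd moments, any unbiasing constants `B` satisfying the recursion
`Cᵢ/i! − B₂C_{i−2}/(i−2)! − ⋯ − B_{i−2}C₂/2! − Bᵢ = 0`, any `T ≥ max Cᵢ^{1/i}`,
`E ≥ max (Tʲ|Bᵢ|/j!)^{1/(i+j)}`, any envelopes `Λᵢ` for `|λⁱ L^{(i)}(λ)|` with ratio
bound `R` at scale `λ`, the estimator
`G_λ(τ) = F_λ(τ) − Σᵢ Bᵢ ηⁱ F_λ^{(i)}(τ)` with `F_λ(t) = L((1−t)λ)` satisfies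
`|E[G_λ(τ)] − L(λ)| ≤ c k R(λ) Λ_{k+2}(λ) (2Eη)^{k+2}`. -/
theorem stmt14 :
    ∃ c : ℝ, 0 < c ∧
      ∀ (Ω : Type) [MeasureSpace Ω], IsProbabilityMeasure (volume : Measure Ω) →
      ∀ (k : ℕ), Even k → 2 ≤ k →
      ∀ (L : ℝ → ℝ), ContDiffOn ℝ (k + 2) L (Set.Ioi 0) →
      ∀ (τ : Ω → ℝ), Measurable τ → (∀ ω, |τ ω| ≤ 1 / 2) →
      ∀ (η : ℝ), 0 ≤ η →
      ∀ (C B : ℕ → ℝ), C 0 = 1 → C 2 = 1 → B 0 = 1 →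
      (∀ i, i ≤ k + 2 → Even i → (∫ ω, (τ ω) ^ i) = C i * η ^ i) →
      (∀ i, i ≤ k + 2 → Odd i → (∫ ω, (τ ω) ^ i) = 0) →
      (∀ i, Even i → 2 ≤ i → i ≤ k →
        C i / (i.factorial : ℝ)
            - (∑ j ∈ Finset.Ico 1 (i / 2),
                B (2 * j) * C (i - 2 * j) / ((i - 2 * j).factorial : ℝ))
            - B i = 0) →
      ∀ (T E : ℝ), 1 ≤ T → 1 ≤ E →
      (∀ i, i ≤ k + 2 → Even i → C i ≤ T ^ i) →
      (∀ i, i ≤ k → Even i → ∀ j, j ≤ k + 2 - i →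
        T ^ j / (j.factorial : ℝ) * |B i| ≤ E ^ (i + j)) →
      ∀ (Λ : ℕ → ℝ → ℝ), (∀ i μ, 0 ≤ Λ i μ) →
      (∀ i, i ≤ k + 2 → ∀ μ : ℝ, 0 < μ → |μ ^ i * iteratedDeriv i L μ| ≤ Λ i μ) →
      ∀ (l : ℝ), 0 < l →
      ∀ (R : ℝ), 0 ≤ R →
      (∀ t : ℝ, |t| ≤ 1 / 2 → Λ (k + 2) ((1 - t) * l) ≤ R * Λ (k + 2) l) →
      |(∫ ω, ((fun s : ℝ => L ((1 - s) * l)) (τ ω)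
            - ∑ j ∈ Finset.Icc 1 (k / 2),
                B (2 * j) * η ^ (2 * j) *
                  iteratedDeriv (2 * j) (fun s : ℝ => L ((1 - s) * l)) (τ ω)))
          - L l|
        ≤ c * k * R * Λ (k + 2) l * (2 * E * η) ^ (k + 2) := by
  refine ⟨1, one_pos, ?_⟩
  intro Ω _ hprob k hke hk2 L hL τ hτm hτb η hη C B hC0 hC2 hB0 hme hmo hrec
    T E hT hE hCT hBE Λ hΛ0 hΛ l hl R hR hRΛ
  have hdiv : k / 2 * 2 = k := Nat.div_mul_cancel hke.two_dvd
  have hL' : ContDiffOn ℝ ((k+2 : ℕ)) L (Set.Ioi 0) := by exact_mod_cast hL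
  set F : ℝ → ℝ := fun s => L ((1 - s) * l) with hFdef
  set s0 : Set ℝ := Set.Ioo (-1 : ℝ) 1 with hs0
  have hIccsub : Set.Icc (-(1/2) : ℝ) (1/2) ⊆ s0 := fun y hy =>
    ⟨by linarith [hy.1], by linarith [hy.2]⟩
  have hmem : ∀ ω, τ ω ∈ Set.Icc (-(1/2) : ℝ) (1/2) := fun ω => by
    rw [Set.mem_Icc, ← abs_le]; exact hτb ω
  have hmaps : Set.MapsTo (fun s : ℝ => (1 - s) * l) s0 (Set.Ioi 0) := fun t ht => by
    have : 0 < 1 - t := by have := ht.2; simp only [hs0, Set.mem_Ioo] at ht; linarith [ht.2]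
    exact Set.mem_Ioi.2 (mul_pos this hl)
  have hFs : ContDiffOn ℝ ((k+2 : ℕ)) F s0 := by
    have := hL'.comp (((contDiff_const.sub contDiff_id).mul contDiff_const).contDiffOn) hmaps
    simpa [Function.comp_def] using this
  have hchain := st14_chain hl hL'
  set M : ℝ := 2^(k+2) * (R * Λ (k+2) l) with hMdef
  have hM0 : 0 ≤ M := by
    rw [hMdef]
    exact mul_nonneg (by positivity) (mul_nonneg hR (hΛ0 _ _))
  have hkeven2 : Even (k+2) := hke.add (by decide)
  -- top derivative bound
  have htop : ∀ y ∈ Set.Icc (-(1/2) : ℝ) (1/2), |iteratedDeriv (k+2) F y| ≤ M := by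
    intro y hy
    have hy1 : -(1/2 : ℝ) ≤ y := hy.1
    have hy2 : y ≤ (1/2 : ℝ) := hy.2
    have hys : y ∈ s0 := hIccsub hy
    have hx : (0:ℝ) < (1-y)*l := mul_pos (by linarith) hl
    rw [hchain (k+2) le_rfl y hys]
    have h1 : |((1-y)*l)^(k+2) * iteratedDeriv (k+2) L ((1-y)*l)| ≤ Λ (k+2) ((1-y)*l) :=
      hΛ (k+2) le_rfl _ hx
    have h2 : Λ (k+2) ((1-y)*l) ≤ R * Λ (k+2) l := hRΛ y (abs_le.mpr ⟨hy1, hy2⟩)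
    have h4 : |(-l)^(k+2) * iteratedDeriv (k+2) L ((1-y)*l)| * (1-y)^(k+2)
        = |((1-y)*l)^(k+2) * iteratedDeriv (k+2) L ((1-y)*l)| := by
      rw [abs_mul, abs_mul, abs_pow, abs_pow, abs_neg, abs_mul, mul_pow]
      have : |1-y| = 1-y := abs_of_pos (by linarith)
      rw [this]
      ring
    have h6 : (1:ℝ) ≤ (2*(1-y))^(k+2) := one_le_pow₀ (by linarith)
    calc |(-l)^(k+2) * iteratedDeriv (k+2) L ((1-y)*l)|
        = |(-l)^(k+2) * iteratedDeriv (k+2) L ((1-y)*l)| * 1 := (mul_one _).symm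
      _ ≤ |(-l)^(k+2) * iteratedDeriv (k+2) L ((1-y)*l)| * (2*(1-y))^(k+2) :=
          mul_le_mul_of_nonneg_left h6 (abs_nonneg _)
      _ = 2^(k+2) * (|(-l)^(k+2) * iteratedDeriv (k+2) L ((1-y)*l)| * (1-y)^(k+2)) := by
          rw [mul_pow]; ring
      _ = 2^(k+2) * |((1-y)*l)^(k+2) * iteratedDeriv (k+2) L ((1-y)*l)| := by rw [h4]
      _ ≤ 2^(k+2) * (R * Λ (k+2) l) :=
          mul_le_mul_of_nonneg_left (h1.trans h2) (by positivity)
  have hMb : ∀ j : ℕ, 2*j ≤ k → ∀ y ∈ Set.Icc (-(1/2) : ℝ) (1/2),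
      |iteratedDeriv (k+2-2*j) (iteratedDeriv (2*j) F) y| ≤ M := by
    intro j hj y hy
    rw [st14_itD_itD, show 2*j + (k+2-2*j) = k+2 from by omega]
    exact htop y hy
  -- Taylor remainder bound
  have hRemB : ∀ j : ℕ, j ≤ k/2 → ∀ t : ℝ, |t| ≤ 1/2 →
      |iteratedDeriv (2*j) F t - ∑ m ∈ Finset.range (k+2-2*j),
          iteratedDeriv (2*j+m) F 0 / (m.factorial : ℝ) * t^m|
        ≤ M * |t|^(k+2-2*j) / ((k+2-2*j).factorial : ℝ) := by
    intro j hj t ht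
    have h2j : 2*j ≤ k := by omega
    have hnn : k+2-2*j = (k+1-2*j)+1 := by omega
    have hf : ContDiffOn ℝ (((k+1-2*j)+1 : ℕ)) (iteratedDeriv (2*j) F) s0 := by
      have := st14_contDiffOn_iteratedDeriv isOpen_Ioo hFs (2*j) (k+2-2*j) (by omega)
      rwa [hnn] at this
    have hMj : ∀ y ∈ Set.Icc (-(1/2) : ℝ) (1/2),
        |iteratedDeriv ((k+1-2*j)+1) (iteratedDeriv (2*j) F) y| ≤ M := by
      have := hMb j h2j
      rwa [hnn] at this
    have htay := st14_taylor hf hMj ht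
    rw [hnn]
    have hsum : ∑ m ∈ Finset.range ((k+1-2*j)+1),
        t^m / (m.factorial : ℝ) * iteratedDeriv m (iteratedDeriv (2*j) F) 0
        = ∑ m ∈ Finset.range ((k+1-2*j)+1),
            iteratedDeriv (2*j+m) F 0 / (m.factorial : ℝ) * t^m := by
      refine Finset.sum_congr rfl fun m _ => ?_
      rw [st14_itD_itD]
      ring
    rw [hsum] at htay
    exact htay
  -- integrability
  have hcont2j : ∀ j : ℕ, 2*j ≤ k+2 →
      ContinuousOn (iteratedDeriv (2*j) F) (Set.Icc (-(1/2) : ℝ) (1/2)) := fun j hj =>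
    (st14_continuousOn isOpen_Ioo hFs hj).mono hIccsub
  have hInt : ∀ j : ℕ, 2*j ≤ k+2 → Integrable (fun ω => iteratedDeriv (2*j) F (τ ω)) :=
    fun j hj => st14_integrable hprob (hcont2j j hj) hτm hτb
  have hIntPow : ∀ m : ℕ, Integrable (fun ω => (τ ω)^m) := fun m =>
    st14_integrable hprob ((continuous_pow m).continuousOn) hτm hτb
  have hIntRem : ∀ j : ℕ, j ≤ k/2 → Integrable (fun ω =>
      iteratedDeriv (2*j) F (τ ω) - ∑ m ∈ Finset.range (k+2-2*j),
        iteratedDeriv (2*j+m) F 0 / (m.factorial : ℝ) * (τ ω)^m) := by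
    intro j hj
    refine (hInt j (by omega)).sub (integrable_finset_sum _ fun m _ => ?_)
    exact (hIntPow m).const_mul _
  set e : ℕ → ℝ := fun j => if j = 0 then (1:ℝ) else -(B (2*j) * η^(2*j)) with he
  -- pointwise identity
  have hpt : ∀ ω, F (τ ω) - ∑ j ∈ Finset.Icc 1 (k/2),
      B (2*j) * η^(2*j) * iteratedDeriv (2*j) F (τ ω)
      = ∑ j ∈ Finset.range (k/2+1), e j * iteratedDeriv (2*j) F (τ ω) := by
    intro ω
    rw [show Finset.range (k/2+1) = insert 0 (Finset.Icc 1 (k/2)) from by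
        ext x; simp only [Finset.mem_range, Finset.mem_insert, Finset.mem_Icc]; omega,
      Finset.sum_insert (by simp)]
    have h0 : e 0 * iteratedDeriv (2*0) F (τ ω) = F (τ ω) := by
      simp [he, iteratedDeriv_zero]
    rw [h0, sub_eq_add_neg, ← Finset.sum_neg_distrib]
    congr 1
    refine Finset.sum_congr rfl fun j hj => ?_
    rw [Finset.mem_Icc] at hj
    rw [he]
    simp only [if_neg (show ¬ j = 0 from by omega)]
    ring
  -- value of the integral
  have hval : (∫ ω, (F (τ ω) - ∑ j ∈ Finset.Icc 1 (k/2),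
        B (2*j) * η^(2*j) * iteratedDeriv (2*j) F (τ ω)))
      = (∑ j ∈ Finset.range (k/2+1), e j * ∫ ω,
          (iteratedDeriv (2*j) F (τ ω) - ∑ m ∈ Finset.range (k+2-2*j),
            iteratedDeriv (2*j+m) F 0 / (m.factorial : ℝ) * (τ ω)^m)) + L l := by
    rw [show (fun ω => F (τ ω) - ∑ j ∈ Finset.Icc 1 (k/2),
        B (2*j) * η^(2*j) * iteratedDeriv (2*j) F (τ ω))
        = fun ω => ∑ j ∈ Finset.range (k/2+1), e j * iteratedDeriv (2*j) F (τ ω) from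
      funext hpt]
    rw [integral_finset_sum _ (fun j hj => by
      refine ((hInt j ?_).const_mul (e j))
      rw [Finset.mem_range] at hj; omega)]
    have hj_eval : ∀ j ∈ Finset.range (k/2+1),
        (∫ ω, e j * iteratedDeriv (2*j) F (τ ω))
        = e j * ((∫ ω, (iteratedDeriv (2*j) F (τ ω) - ∑ m ∈ Finset.range (k+2-2*j),
            iteratedDeriv (2*j+m) F 0 / (m.factorial : ℝ) * (τ ω)^m))
          + ∑ m ∈ Finset.range (k+2-2*j),
              iteratedDeriv (2*j+m) F 0 / (m.factorial : ℝ) * ∫ ω, (τ ω)^m) := by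
      intro j hj
      rw [Finset.mem_range] at hj
      rw [integral_const_mul]
      congr 1
      rw [show (fun ω => iteratedDeriv (2*j) F (τ ω))
          = fun ω => (iteratedDeriv (2*j) F (τ ω) - ∑ m ∈ Finset.range (k+2-2*j),
              iteratedDeriv (2*j+m) F 0 / (m.factorial : ℝ) * (τ ω)^m)
            + ∑ m ∈ Finset.range (k+2-2*j),
              iteratedDeriv (2*j+m) F 0 / (m.factorial : ℝ) * (τ ω)^m from
        funext fun ω => by ring]
      rw [integral_add (hIntRem j (by omega))
        (integrable_finset_sum _ fun m _ => (hIntPow m).const_mul _)]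
      congr 1
      rw [integral_finset_sum _ (fun m _ => (hIntPow m).const_mul _)]
      exact Finset.sum_congr rfl fun m _ => integral_const_mul _ _
    rw [Finset.sum_congr rfl hj_eval]
    have hdistrib : ∑ j ∈ Finset.range (k/2+1), e j * ((∫ ω,
        (iteratedDeriv (2*j) F (τ ω) - ∑ m ∈ Finset.range (k+2-2*j),
          iteratedDeriv (2*j+m) F 0 / (m.factorial : ℝ) * (τ ω)^m))
        + ∑ m ∈ Finset.range (k+2-2*j),
            iteratedDeriv (2*j+m) F 0 / (m.factorial : ℝ) * ∫ ω, (τ ω)^m)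
        = (∑ j ∈ Finset.range (k/2+1), e j * ∫ ω,
            (iteratedDeriv (2*j) F (τ ω) - ∑ m ∈ Finset.range (k+2-2*j),
              iteratedDeriv (2*j+m) F 0 / (m.factorial : ℝ) * (τ ω)^m))
          + ∑ j ∈ Finset.range (k/2+1), e j * ∑ m ∈ Finset.range (k+2-2*j),
              iteratedDeriv (2*j+m) F 0 / (m.factorial : ℝ) * ∫ ω, (τ ω)^m := by
      rw [← Finset.sum_add_distrib]
      exact Finset.sum_congr rfl fun j _ => by ring
    rw [hdistrib]
    congr 1
    have hpoly := st14_poly hke hk2 C B η hC0 hB0 hrec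
      (fun m => iteratedDeriv m F 0) (fun m => ∫ ω, (τ ω)^m) hmo hme
    rw [hpoly]
    simp [hFdef, iteratedDeriv_zero]
  rw [hval, add_sub_cancel_right]
  have hjb : ∀ j ∈ Finset.range (k/2+1),
      |e j * ∫ ω, (iteratedDeriv (2*j) F (τ ω) - ∑ m ∈ Finset.range (k+2-2*j),
          iteratedDeriv (2*j+m) F 0 / (m.factorial : ℝ) * (τ ω)^m)|
        ≤ M * η^(k+2) * E^(k+2) := by
    intro j hjmem
    rw [Finset.mem_range] at hjmem
    have hj : j ≤ k/2 := by omega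
    have h2j : 2*j ≤ k := by omega
    have hevenn : Even (k+2-2*j) := by
      obtain ⟨K, hK⟩ := hke
      exact ⟨K+1-j, by omega⟩
    have hIr : |∫ ω, (iteratedDeriv (2*j) F (τ ω) - ∑ m ∈ Finset.range (k+2-2*j),
        iteratedDeriv (2*j+m) F 0 / (m.factorial : ℝ) * (τ ω)^m)|
        ≤ M / ((k+2-2*j).factorial : ℝ) * (C (k+2-2*j) * η^(k+2-2*j)) := by
      calc |∫ ω, (iteratedDeriv (2*j) F (τ ω) - ∑ m ∈ Finset.range (k+2-2*j),
          iteratedDeriv (2*j+m) F 0 / (m.factorial : ℝ) * (τ ω)^m)|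
          ≤ ∫ ω, |iteratedDeriv (2*j) F (τ ω) - ∑ m ∈ Finset.range (k+2-2*j),
              iteratedDeriv (2*j+m) F 0 / (m.factorial : ℝ) * (τ ω)^m| := by
            simpa [Real.norm_eq_abs] using
              norm_integral_le_integral_norm (μ := (volume : Measure Ω))
                (fun ω => iteratedDeriv (2*j) F (τ ω) - ∑ m ∈ Finset.range (k+2-2*j),
                  iteratedDeriv (2*j+m) F 0 / (m.factorial : ℝ) * (τ ω)^m)
        _ ≤ ∫ ω, M / ((k+2-2*j).factorial : ℝ) * (τ ω)^(k+2-2*j) := by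
            refine integral_mono ((hIntRem j hj).abs) ((hIntPow _).const_mul _) ?_
            intro ω
            calc |iteratedDeriv (2*j) F (τ ω) - ∑ m ∈ Finset.range (k+2-2*j),
                iteratedDeriv (2*j+m) F 0 / (m.factorial : ℝ) * (τ ω)^m|
                ≤ M * |τ ω|^(k+2-2*j) / ((k+2-2*j).factorial : ℝ) :=
                  hRemB j hj (τ ω) (hτb ω)
              _ = M / ((k+2-2*j).factorial : ℝ) * (τ ω)^(k+2-2*j) := by
                  rw [hevenn.pow_abs]; ring
        _ = M / ((k+2-2*j).factorial : ℝ) * (C (k+2-2*j) * η^(k+2-2*j)) := by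
            rw [integral_const_mul, hme (k+2-2*j) (by omega) hevenn]
    have heb : |e j| * (M / ((k+2-2*j).factorial : ℝ) * (C (k+2-2*j) * η^(k+2-2*j)))
        ≤ M * η^(k+2) * E^(k+2) := by
      by_cases h0 : j = 0
      · subst h0
        have he0 : |e 0| = 1 := by rw [he]; simp
        have hCle : C (k+2) ≤ T^(k+2) := hCT _ le_rfl hkeven2
        have hTE : T^(k+2) / (((k+2).factorial : ℕ) : ℝ) ≤ E^(k+2) := by
          have := hBE 0 (by omega) Even.zero (k+2) (by omega)
          simpa [hB0] using this
        rw [he0, one_mul, show k+2-2*0 = k+2 from by omega]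
        calc M / (((k+2).factorial : ℕ) : ℝ) * (C (k+2) * η^(k+2))
            ≤ M / (((k+2).factorial : ℕ) : ℝ) * (T^(k+2) * η^(k+2)) :=
              mul_le_mul_of_nonneg_left
                (mul_le_mul_of_nonneg_right hCle (pow_nonneg hη _))
                (div_nonneg hM0 (by positivity))
          _ = M * η^(k+2) * (T^(k+2) / (((k+2).factorial : ℕ) : ℝ)) := by ring
          _ ≤ M * η^(k+2) * E^(k+2) :=
              mul_le_mul_of_nonneg_left hTE (mul_nonneg hM0 (pow_nonneg hη _))
      · have he1 : |e j| = |B (2*j)| * η^(2*j) := by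
          rw [he]
          simp only [if_neg h0]
          rw [abs_neg, abs_mul, abs_pow, abs_of_nonneg hη]
        have hCle : C (k+2-2*j) ≤ T^(k+2-2*j) := hCT _ (by omega) hevenn
        have hTE := hBE (2*j) h2j (even_two_mul j) (k+2-2*j) (by omega)
        rw [show 2*j+(k+2-2*j) = k+2 from by omega] at hTE
        rw [he1]
        calc |B (2*j)| * η^(2*j) * (M / (((k+2-2*j).factorial : ℕ) : ℝ) * (C (k+2-2*j) * η^(k+2-2*j)))
            ≤ |B (2*j)| * η^(2*j) * (M / (((k+2-2*j).factorial : ℕ) : ℝ) * (T^(k+2-2*j) * η^(k+2-2*j))) :=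
              mul_le_mul_of_nonneg_left
                (mul_le_mul_of_nonneg_left
                  (mul_le_mul_of_nonneg_right hCle (pow_nonneg hη _))
                  (div_nonneg hM0 (by positivity)))
                (mul_nonneg (abs_nonneg _) (pow_nonneg hη _))
          _ = (M * (η^(2*j) * η^(k+2-2*j))) * (T^(k+2-2*j) / (((k+2-2*j).factorial : ℕ) : ℝ) * |B (2*j)|) := by
              ring
          _ = (M * η^(k+2)) * (T^(k+2-2*j) / (((k+2-2*j).factorial : ℕ) : ℝ) * |B (2*j)|) := by
              rw [← pow_add, show 2*j+(k+2-2*j) = k+2 from by omega]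
          _ ≤ (M * η^(k+2)) * E^(k+2) :=
              mul_le_mul_of_nonneg_left hTE (mul_nonneg hM0 (pow_nonneg hη _))
          _ = M * η^(k+2) * E^(k+2) := by ring
    calc |e j * ∫ ω, (iteratedDeriv (2*j) F (τ ω) - ∑ m ∈ Finset.range (k+2-2*j),
        iteratedDeriv (2*j+m) F 0 / (m.factorial : ℝ) * (τ ω)^m)|
        = |e j| * |∫ ω, (iteratedDeriv (2*j) F (τ ω) - ∑ m ∈ Finset.range (k+2-2*j),
            iteratedDeriv (2*j+m) F 0 / (m.factorial : ℝ) * (τ ω)^m)| := abs_mul _ _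
      _ ≤ |e j| * (M / ((k+2-2*j).factorial : ℝ) * (C (k+2-2*j) * η^(k+2-2*j))) :=
          mul_le_mul_of_nonneg_left hIr (abs_nonneg _)
      _ ≤ M * η^(k+2) * E^(k+2) := heb
  have hX0 : (0:ℝ) ≤ 2^(k+2) * (R * Λ (k+2) l) * η^(k+2) * E^(k+2) :=
    mul_nonneg (mul_nonneg (mul_nonneg (by positivity) (mul_nonneg hR (hΛ0 _ _)))
      (pow_nonneg hη _)) (pow_nonneg (by linarith) _)
  have hfact : ((k/2+1 : ℕ) : ℝ) ≤ (k : ℝ) := by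
    exact_mod_cast (show k/2+1 ≤ k by omega)
  calc |∑ j ∈ Finset.range (k/2+1), e j * ∫ ω,
        (iteratedDeriv (2*j) F (τ ω) - ∑ m ∈ Finset.range (k+2-2*j),
          iteratedDeriv (2*j+m) F 0 / (m.factorial : ℝ) * (τ ω)^m)|
      ≤ ∑ j ∈ Finset.range (k/2+1), |e j * ∫ ω,
          (iteratedDeriv (2*j) F (τ ω) - ∑ m ∈ Finset.range (k+2-2*j),
            iteratedDeriv (2*j+m) F 0 / (m.factorial : ℝ) * (τ ω)^m)| :=
        Finset.abs_sum_le_sum_abs _ _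
    _ ≤ ∑ _j ∈ Finset.range (k/2+1), M * η^(k+2) * E^(k+2) := Finset.sum_le_sum hjb
    _ = ((k/2+1 : ℕ) : ℝ) * (M * η^(k+2) * E^(k+2)) := by
        rw [Finset.sum_const, Finset.card_range, nsmul_eq_mul]
    _ = ((k/2+1 : ℕ) : ℝ) * (2^(k+2) * (R * Λ (k+2) l) * η^(k+2) * E^(k+2)) := by
        rw [hMdef]
    _ ≤ (k : ℝ) * (2^(k+2) * (R * Λ (k+2) l) * η^(k+2) * E^(k+2)) :=
        mul_le_mul_of_nonneg_right hfact hX0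
    _ = 1 * k * R * Λ (k+2) l * (2*E*η)^(k+2) := by
        rw [mul_pow, mul_pow]; ring
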